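/- Under the setting of the previous statement, additionally assume that for every $x \ne 0$ there exist at least 3 linearly independent vertices $v_i$ with $v_i^T x > 0$. Then the Jacobian $\frac{ds}{dx} = (p-1)VAV^T$ has rank exactly 2, and its kernel is spanned by $x$. -/

import Mathlib

open Matrix

theorem stmt10 (n : ℕ) (v : Fin n → Fin 3 → ℝ) (p : ℝ) (hp : 2 < p)
    (x : Fin 3 → ℝ) (hx : x ≠ 0)
    (a : Fin n → ℝ) (hadef : ∀ i, a i = max (v i ⬝ᵥ x) 0)
    (hpos : 0 < ∑ i, a i ^ p)
    (V : Matrix (Fin 3) (Fin n) ℝ) (hV : V = Matrix.of fun r i => v i r)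
    (A : Matrix (Fin n) (Fin n) ℝ)
    (hA : A = (∑ i, a i ^ p) ^ (1 / p - 1) • Matrix.diagonal (fun i => a i ^ (p - 2))
        - (∑ i, a i ^ p) ^ (1 / p - 2) •
            Matrix.of (fun i j => a i ^ (p - 1) * a j ^ (p - 1)))
    (hindep : ∀ y : Fin 3 → ℝ, y ≠ 0 → ∃ s : Fin 3 → Fin n,
        LinearIndependent ℝ (fun r => v (s r)) ∧ ∀ r, 0 < v (s r) ⬝ᵥ y) :
    ((p - 1) • (V * A * Vᵀ)).rank = 2 ∧
    LinearMap.ker ((p - 1) • (V * A * Vᵀ)).mulVecLin = Submodule.span ℝ {x} := by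
  set S : ℝ := ∑ i, a i ^ p with hSdef
  have hS : 0 < S := hpos
  have hSne : S ≠ 0 := hS.ne'
  have ha0 : ∀ i, 0 ≤ a i := fun i => (hadef i).symm ▸ le_max_right _ _
  have l1 : ∀ i, a i ^ (p - 2) * a i = a i ^ (p - 1) := by
    intro i
    rcases eq_or_lt_of_le (ha0 i) with h | h
    · rw [← h, Real.zero_rpow (by linarith), Real.zero_rpow (by linarith), zero_mul]
    · rw [← Real.rpow_add_one h.ne']; congr 1; ring
  have l2 : ∀ i, a i ^ (p - 1) * a i = a i ^ p := by
    intro i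
    rcases eq_or_lt_of_le (ha0 i) with h | h
    · rw [← h, Real.zero_rpow (by linarith), Real.zero_rpow (by linarith), zero_mul]
    · rw [← Real.rpow_add_one h.ne']; congr 1; ring
  have l3 : ∀ i, a i ^ (p - 2) * (v i ⬝ᵥ x) = a i ^ (p - 1) := by
    intro i
    rcases le_or_gt (v i ⬝ᵥ x) 0 with h | h
    · have hai : a i = 0 := by rw [hadef i, max_eq_right h]
      rw [hai, Real.zero_rpow (by linarith), Real.zero_rpow (by linarith), zero_mul]
    · have hai : a i = v i ⬝ᵥ x := by rw [hadef i, max_eq_left h.le]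
      rw [← hai, l1 i]
  have l4 : ∀ i, a i ^ (p - 1) * (v i ⬝ᵥ x) = a i ^ p := by
    intro i
    rcases le_or_gt (v i ⬝ᵥ x) 0 with h | h
    · have hai : a i = 0 := by rw [hadef i, max_eq_right h]
      rw [hai, Real.zero_rpow (by linarith), Real.zero_rpow (by linarith), zero_mul]
    · have hai : a i = v i ⬝ᵥ x := by rw [hadef i, max_eq_left h.le]
      rw [← hai, l2 i]
  have hSp : S ^ (1 / p - 2) * S = S ^ (1 / p - 1) := by
    rw [← Real.rpow_add_one hSne]; congr 1; ring
  have hVt : ∀ u : Fin 3 → ℝ, Vᵀ *ᵥ u = fun i => v i ⬝ᵥ u := by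
    intro u; funext i
    simp [hV, Matrix.mulVec, dotProduct, mul_comm]
  have hAmul : ∀ c : Fin n → ℝ, A *ᵥ c = fun i =>
      S ^ (1 / p - 1) * (a i ^ (p - 2) * c i)
        - S ^ (1 / p - 2) * (a i ^ (p - 1) * ∑ j, a j ^ (p - 1) * c j) := by
    intro c; funext i
    rw [hA, Matrix.sub_mulVec, Matrix.smul_mulVec, Matrix.smul_mulVec]
    simp only [Pi.sub_apply, Pi.smul_apply, smul_eq_mul, Matrix.mulVec_diagonal]
    congr 1
    simp only [Matrix.mulVec, dotProduct, Matrix.of_apply, Finset.mul_sum]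
    exact Finset.sum_congr rfl fun j _ => by ring
  have hx0 : A *ᵥ (Vᵀ *ᵥ x) = 0 := by
    rw [hVt, hAmul]
    funext i
    have hsum : ∑ j, a j ^ (p - 1) * (v j ⬝ᵥ x) = S := Finset.sum_congr rfl fun j _ => l4 j
    simp only [Pi.zero_apply]
    rw [hsum, l3 i]
    linear_combination (-(a i ^ (p - 1))) * hSp
  have hkx : (V * A * Vᵀ) *ᵥ x = 0 := by
    rw [Matrix.mul_assoc, ← Matrix.mulVec_mulVec, ← Matrix.mulVec_mulVec, hx0, Matrix.mulVec_zero]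
  -- main kernel lemma
  have key : ∀ u : Fin 3 → ℝ, (V * A * Vᵀ) *ᵥ u = 0 → ∃ t : ℝ, u = t • x := by
    intro u hu
    set c : Fin n → ℝ := fun i => v i ⬝ᵥ u with hc
    set W : ℝ := ∑ i, a i ^ (p - 1) * c i with hW
    set t : ℝ := W / S with ht
    have hQ : c ⬝ᵥ (A *ᵥ c) = 0 := by
      have h2 : u ⬝ᵥ ((V * A * Vᵀ) *ᵥ u) = c ⬝ᵥ (A *ᵥ c) := by
        rw [Matrix.mul_assoc, ← Matrix.mulVec_mulVec, Matrix.dotProduct_mulVec,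
          ← Matrix.mulVec_transpose, hVt u, ← Matrix.mulVec_mulVec, hVt u]
      rw [← h2, hu, dotProduct_zero]
    have hQ' : S ^ (1 / p - 1) * (∑ i, a i ^ (p - 2) * c i ^ 2)
        - S ^ (1 / p - 2) * W ^ 2 = 0 := by
      rw [hAmul] at hQ
      simp only [dotProduct, ← hW] at hQ
      have e2 : ∑ i, c i * (S ^ (1 / p - 1) * (a i ^ (p - 2) * c i)
            - S ^ (1 / p - 2) * (a i ^ (p - 1) * W))
          = ∑ i, (S ^ (1 / p - 1) * (a i ^ (p - 2) * c i ^ 2)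
            - (S ^ (1 / p - 2) * W) * (a i ^ (p - 1) * c i)) :=
        Finset.sum_congr rfl fun i _ => by ring
      rw [e2, Finset.sum_sub_distrib, ← Finset.mul_sum, ← Finset.mul_sum, ← hW] at hQ
      linear_combination hQ
    have hSpow_pos : (0:ℝ) < S ^ (1 / p - 1) := Real.rpow_pos_of_pos hS _
    have hE : S * (∑ i, a i ^ (p - 2) * c i ^ 2) = W ^ 2 := by
      have h2 : S ^ (1 / p - 1) * (S * (∑ i, a i ^ (p - 2) * c i ^ 2))
          = S ^ (1 / p - 1) * W ^ 2 := by
        linear_combination S * hQ' + W ^ 2 * hSp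
      exact mul_left_cancel₀ hSpow_pos.ne' h2
    have hR : ∑ i, a i ^ (p - 2) * (c i - t * a i) ^ 2 = 0 := by
      have e : ∀ i ∈ Finset.univ, a i ^ (p - 2) * (c i - t * a i) ^ 2
          = a i ^ (p - 2) * c i ^ 2 - 2 * t * (a i ^ (p - 1) * c i) + t ^ 2 * a i ^ p := by
        intro i _
        linear_combination (t ^ 2 * a i - 2 * t * c i) * l1 i + t ^ 2 * l2 i
      rw [Finset.sum_congr rfl e, Finset.sum_add_distrib, Finset.sum_sub_distrib,
        ← Finset.mul_sum, ← Finset.mul_sum, ← hW, ← hSdef, ht]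
      field_simp
      linear_combination hE
    have hterm : ∀ i ∈ Finset.univ, (0:ℝ) ≤ a i ^ (p - 2) * (c i - t * a i) ^ 2 :=
      fun i _ => mul_nonneg (Real.rpow_nonneg (ha0 i) _) (sq_nonneg _)
    have hzero := (Finset.sum_eq_zero_iff_of_nonneg hterm).1 hR
    obtain ⟨s, hli, hvs⟩ := hindep x hx
    have hcs : ∀ r, c (s r) = t * a (s r) := by
      intro r
      have hapos : 0 < a (s r) := by
        rw [hadef]; exact lt_max_iff.2 (Or.inl (hvs r))
      have h2 := hzero (s r) (Finset.mem_univ _)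
      have h3 : (c (s r) - t * a (s r)) ^ 2 = 0 :=
        (mul_eq_zero.1 h2).resolve_left (Real.rpow_pos_of_pos hapos _).ne'
      have h4 : c (s r) - t * a (s r) = 0 :=
        (pow_eq_zero_iff (by norm_num : (2:ℕ) ≠ 0)).1 h3
      linarith
    have hvw : ∀ r, v (s r) ⬝ᵥ (u - t • x) = 0 := by
      intro r
      have ha : a (s r) = v (s r) ⬝ᵥ x := by rw [hadef]; exact max_eq_left (hvs r).le
      have h5 : v (s r) ⬝ᵥ (u - t • x) = c (s r) - t * (v (s r) ⬝ᵥ x) := by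
        simp [dotProduct_sub, hc]
      rw [h5, ← ha, hcs r]; ring
    have hspan : Submodule.span ℝ (Set.range fun r => v (s r)) = ⊤ :=
      hli.span_eq_top_of_card_eq_finrank (by simp [Module.finrank_fin_fun])
    have hww : (u - t • x) ⬝ᵥ (u - t • x) = 0 := by
      have hmem : (u - t • x) ∈ Submodule.span ℝ (Set.range fun r => v (s r)) := by
        rw [hspan]; exact Submodule.mem_top
      refine Submodule.span_induction (p := fun y _ => y ⬝ᵥ (u - t • x) = 0) ?_ ?_ ?_ ?_ hmem
      · rintro y ⟨r, rfl⟩; exact hvw r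
      · simp
      · intro y z _ _ hy hz; rw [add_dotProduct, hy, hz, add_zero]
      · intro b y _ hy; rw [smul_dotProduct, hy, smul_zero]
    have hw0 : u - t • x = 0 := dotProduct_self_eq_zero.1 hww
    exact ⟨t, by rw [← sub_eq_zero]; exact hw0⟩
  have hp1 : p - 1 ≠ 0 := ne_of_gt (by linarith)
  have hker : LinearMap.ker ((p - 1) • (V * A * Vᵀ)).mulVecLin = Submodule.span ℝ {x} := by
    apply le_antisymm
    · intro u hu
      rw [LinearMap.mem_ker, Matrix.mulVecLin_apply, Matrix.smul_mulVec] at hu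
      have h6 : (V * A * Vᵀ) *ᵥ u = 0 := (smul_eq_zero.1 hu).resolve_left hp1
      obtain ⟨t, rfl⟩ := key u h6
      exact Submodule.smul_mem _ _ (Submodule.mem_span_singleton_self x)
    · rw [Submodule.span_singleton_le_iff_mem, LinearMap.mem_ker, Matrix.mulVecLin_apply,
        Matrix.smul_mulVec, hkx, smul_zero]
  refine ⟨?_, hker⟩
  have hrn := LinearMap.finrank_range_add_finrank_ker ((p - 1) • (V * A * Vᵀ)).mulVecLin
  rw [hker, finrank_span_singleton hx, Module.finrank_fin_fun] at hrn
  rw [Matrix.rank]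
  omega
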